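/- Consider the discrete-time LTI system x(l+1) = A x(l) + B u with a constant input u. That is, let x : ℕ → ℝⁿ satisfy x(0) = x₀ and x(l+1) = A x(l) + B u for all l, for a fixed u ∈ ℝᵐ. Then for every i ≥ 1: (i) x(i) = A^{(i)} x₀ + B^{(i)} u, and (ii) ∑_{l=0}^{i-1} ( x(l)ᵀ Q x(l) + uᵀ R u ) = x₀ᵀ Q^{(i)} x₀ + uᵀ R^{(i)} u + 2 x₀ᵀ N^{(i)} u. -/

import Mathlib

open Matrix Finset

lemma dp_sandwich {n m k : ℕ} (M : Matrix (Fin k) (Fin n) ℝ)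
    (P : Matrix (Fin k) (Fin k) ℝ) (N : Matrix (Fin k) (Fin m) ℝ)
    (a : Fin n → ℝ) (b : Fin m → ℝ) :
    a ⬝ᵥ ((Mᵀ * P * N) *ᵥ b) = (M *ᵥ a) ⬝ᵥ (P *ᵥ (N *ᵥ b)) := by
  simp only [← mulVec_mulVec, dotProduct_mulVec, vecMul_transpose]

lemma dp_symm_flip {k : ℕ} (P : Matrix (Fin k) (Fin k) ℝ) (hP : P.IsSymm)
    (a b : Fin k → ℝ) : a ⬝ᵥ (P *ᵥ b) = b ⬝ᵥ (P *ᵥ a) := by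
  rw [dotProduct_mulVec]; conv_lhs => rw [← hP]
  rw [vecMul_transpose, dotProduct_comm]

/-- lifted dynamics and collapsed finite-horizon cost for a
constant-input LTI system. -/
theorem lifted_dynamics_and_cost_collapse {n m : ℕ}
    (A : Matrix (Fin n) (Fin n) ℝ) (B : Matrix (Fin n) (Fin m) ℝ)
    (Q : Matrix (Fin n) (Fin n) ℝ) (R : Matrix (Fin m) (Fin m) ℝ)
    (hQ : Q.IsSymm) (hR : R.IsSymm)
    (Qg : ℕ → Matrix (Fin n) (Fin n) ℝ)
    (Rg : ℕ → Matrix (Fin m) (Fin m) ℝ)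
    (Ng : ℕ → Matrix (Fin n) (Fin m) ℝ)
    (hQ1 : Qg 1 = Q) (hR1 : Rg 1 = R) (hN1 : Ng 1 = 0)
    (hQrec : ∀ i, 1 ≤ i → Qg (i + 1) = Qg i + (A ^ i)ᵀ * Q * (A ^ i))
    (hRrec : ∀ i, 1 ≤ i → Rg (i + 1) =
      Rg i + (∑ q ∈ Finset.range i, A ^ q * B)ᵀ * Q * (∑ q ∈ Finset.range i, A ^ q * B) + R)
    (hNrec : ∀ i, 1 ≤ i → Ng (i + 1) =
      Ng i + (A ^ i)ᵀ * Q * (∑ q ∈ Finset.range i, A ^ q * B))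
    (x₀ : Fin n → ℝ) (u : Fin m → ℝ) (x : ℕ → Fin n → ℝ)
    (hx0 : x 0 = x₀) (hx : ∀ l, x (l + 1) = A *ᵥ x l + B *ᵥ u)
    (i : ℕ) (hi : 1 ≤ i) :
    x i = (A ^ i) *ᵥ x₀ + (∑ q ∈ Finset.range i, A ^ q * B) *ᵥ u ∧
    ∑ l ∈ Finset.range i, (x l ⬝ᵥ (Q *ᵥ x l) + u ⬝ᵥ (R *ᵥ u)) =
      x₀ ⬝ᵥ (Qg i *ᵥ x₀) + u ⬝ᵥ (Rg i *ᵥ u) + 2 * (x₀ ⬝ᵥ (Ng i *ᵥ u)) := by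
  induction i, hi using Nat.le_induction with
  | base =>
    constructor
    · simp [hx 0, hx0]
    · simp [hx0, hQ1, hR1, hN1]
  | succ i hi ih =>
    obtain ⟨ih1, ih2⟩ := ih
    have hS : ∑ q ∈ Finset.range (i + 1), A ^ q * B =
        A * (∑ q ∈ Finset.range i, A ^ q * B) + B := by
      rw [Finset.sum_range_succ']
      simp [pow_succ', Matrix.mul_assoc]
      rw [Matrix.mul_sum]
    have h1 : x (i + 1) = (A ^ (i+1)) *ᵥ x₀ + (∑ q ∈ Finset.range (i+1), A ^ q * B) *ᵥ u := by
      rw [hx i, ih1, hS, mulVec_add, add_mulVec, mulVec_mulVec, mulVec_mulVec, ← pow_succ']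
      abel
    refine ⟨h1, ?_⟩
    set S := ∑ q ∈ Finset.range i, A ^ q * B with hSdef
    set p := (A ^ i) *ᵥ x₀ with hp
    set q := S *ᵥ u with hq
    have hterm : x i ⬝ᵥ (Q *ᵥ x i) =
        p ⬝ᵥ (Q *ᵥ p) + q ⬝ᵥ (Q *ᵥ q) + 2 * (p ⬝ᵥ (Q *ᵥ q)) := by
      rw [ih1]
      rw [mulVec_add, add_dotProduct, dotProduct_add, dotProduct_add]
      rw [dp_symm_flip Q hQ q p]
      ring
    rw [Finset.sum_range_succ, ih2, hterm,
        hQrec i hi, hRrec i hi, hNrec i hi]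
    simp only [add_mulVec, dotProduct_add, dp_sandwich, ← hp, ← hq, mulVec_mulVec]
    simp only [← hSdef, ← mulVec_mulVec, ← hq]
    ring
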